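/- In the unbiased Waiter-Client game on the edges of K_n, for every l ≥ 2, given any set S of 2^l − 1 vertices of an initially empty board, Waiter has a strategy that within at most 2^l rounds forces a red clique (a clique in Client's graph) on l vertices w_1, ..., w_l contained in S, with w_1 equal to a prescribed vertex v_1 ∈ S, and such that every edge claimed so far (by either player) has at least one endpoint among {w_1, ..., w_l}. -/

import Mathlib

/-- A history of an unbiased Waiter-Client game on `E(K_n)`: the list of rounds played so
far, each recording the pair of offered edges and Client's choice (`true` = first edge
goes to Client's red graph, the other to Waiter's blue graph). -/
abbrev WCHist (n : ℕ) := List (Sym2 (Fin n) × Sym2 (Fin n) × Bool)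

/-- The set of edges claimed (by either player) during a history. -/
def wcClaimed {n : ℕ} (h : WCHist n) : Set (Sym2 (Fin n)) :=
  {e | ∃ x ∈ h, e = x.1 ∨ e = x.2.1}

/-- The set of edges in Client's (red) graph after a history. -/
def wcRed {n : ℕ} (h : WCHist n) : Set (Sym2 (Fin n)) :=
  {e | ∃ x ∈ h, (x.2.2 = true ∧ e = x.1) ∨ (x.2.2 = false ∧ e = x.2.1)}

/-- The history after `r` rounds when Waiter uses strategy `ws` (mapping the current
history to the offered pair of edges) and Client plays `cl` (mapping the current history
to his choice). -/
def wcPlay {n : ℕ} (ws : WCHist n → Sym2 (Fin n) × Sym2 (Fin n))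
    (cl : WCHist n → Bool) : ℕ → WCHist n
  | 0 => []
  | r + 1 =>
    let h := wcPlay ws cl r
    h ++ [((ws h).1, (ws h).2, cl h)]

def strat {n : ℕ} (v0 : Fin n) : ℕ → List (Fin n) → WCHist n → Sym2 (Fin n) × Sym2 (Fin n)
  | 0, _, _ => (s(v0, v0), s(v0, v0))
  | (l+1), L, h =>
    let m := 2 ^ l - 1
    if h.length < m then
      (s(L.getD 0 v0, L.getD (2 * h.length + 1) v0), s(L.getD 0 v0, L.getD (2 * h.length + 2) v0))
    else
      strat v0 l ((List.range m).map (fun k =>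
        L.getD (2 * k + (if (h.getD k (s(v0,v0), s(v0,v0), true)).2.2 then 1 else 2)) v0))
        (h.drop m)

variable {n : ℕ}

lemma wcPlay_length (ws : WCHist n → Sym2 (Fin n) × Sym2 (Fin n)) (cl : WCHist n → Bool)
    (r : ℕ) : (wcPlay ws cl r).length = r := by
  induction r with
  | zero => rfl
  | succ r ih => simp [wcPlay, ih]

lemma wcPlay_getD (ws : WCHist n → Sym2 (Fin n) × Sym2 (Fin n)) (cl : WCHist n → Bool)
    {k r : ℕ} (hk : k < r) (d : Sym2 (Fin n) × Sym2 (Fin n) × Bool) :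
    (wcPlay ws cl r).getD k d =
      ((ws (wcPlay ws cl k)).1, (ws (wcPlay ws cl k)).2, cl (wcPlay ws cl k)) := by
  induction r with
  | zero => omega
  | succ r ih =>
    rcases Nat.lt_succ_iff_lt_or_eq.mp hk with h | h
    · rw [wcPlay, List.getD_append _ _ _ _ (by rw [wcPlay_length]; exact h)]
      exact ih h
    · subst h
      rw [wcPlay]
      rw [List.getD_eq_getElem _ _ (by simp [wcPlay_length])]
      rw [List.getElem_append_right (by simp [wcPlay_length])]
      simp [wcPlay_length]

lemma mem_wcClaimed_wcPlay (ws : WCHist n → Sym2 (Fin n) × Sym2 (Fin n)) (cl : WCHist n → Bool)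
    (r : ℕ) (e : Sym2 (Fin n)) :
    e ∈ wcClaimed (wcPlay ws cl r) ↔
      ∃ k < r, e = (ws (wcPlay ws cl k)).1 ∨ e = (ws (wcPlay ws cl k)).2 := by
  induction r with
  | zero => simp [wcClaimed, wcPlay]
  | succ r ih =>
    constructor
    · rintro ⟨x, hx, hor⟩
      rw [wcPlay] at hx
      simp only [List.mem_append, List.mem_singleton] at hx
      rcases hx with hx | hx
      · obtain ⟨k, hk, h⟩ := ih.mp ⟨x, hx, hor⟩
        exact ⟨k, by omega, h⟩
      · subst hx; exact ⟨r, by omega, hor⟩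
    · rintro ⟨k, hk, h⟩
      rcases Nat.lt_succ_iff_lt_or_eq.mp hk with h' | h'
      · obtain ⟨x, hx, hor⟩ := ih.mpr ⟨k, h', h⟩
        exact ⟨x, by rw [wcPlay]; simp [hx], hor⟩
      · subst h'
        exact ⟨((ws (wcPlay ws cl k)).1, (ws (wcPlay ws cl k)).2, cl (wcPlay ws cl k)),
          by rw [wcPlay]; simp, h⟩

lemma mem_wcRed_wcPlay (ws : WCHist n → Sym2 (Fin n) × Sym2 (Fin n)) (cl : WCHist n → Bool)
    (r : ℕ) (e : Sym2 (Fin n)) :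
    e ∈ wcRed (wcPlay ws cl r) ↔
      ∃ k < r, (cl (wcPlay ws cl k) = true ∧ e = (ws (wcPlay ws cl k)).1) ∨
        (cl (wcPlay ws cl k) = false ∧ e = (ws (wcPlay ws cl k)).2) := by
  induction r with
  | zero => simp [wcRed, wcPlay]
  | succ r ih =>
    constructor
    · rintro ⟨x, hx, hor⟩
      rw [wcPlay] at hx
      simp only [List.mem_append, List.mem_singleton] at hx
      rcases hx with hx | hx
      · obtain ⟨k, hk, h⟩ := ih.mp ⟨x, hx, hor⟩
        exact ⟨k, by omega, h⟩
      · subst hx; exact ⟨r, by omega, hor⟩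
    · rintro ⟨k, hk, h⟩
      rcases Nat.lt_succ_iff_lt_or_eq.mp hk with h' | h'
      · obtain ⟨x, hx, hor⟩ := ih.mpr ⟨k, h', h⟩
        exact ⟨x, by rw [wcPlay]; simp [hx], hor⟩
      · subst h'
        exact ⟨((ws (wcPlay ws cl k)).1, (ws (wcPlay ws cl k)).2, cl (wcPlay ws cl k)),
          by rw [wcPlay]; simp, h⟩

lemma wcPlay_comp (ws ws' : WCHist n → Sym2 (Fin n) × Sym2 (Fin n)) (cl : WCHist n → Bool)
    (m : ℕ) (hs : ∀ h : WCHist n, ws (wcPlay ws cl m ++ h) = ws' h) (t : ℕ) :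
    wcPlay ws cl (m + t) = wcPlay ws cl m ++ wcPlay ws' (fun h => cl (wcPlay ws cl m ++ h)) t := by
  induction t with
  | zero => simp [wcPlay]
  | succ t ih =>
    have : m + (t + 1) = (m + t) + 1 := by omega
    rw [this, wcPlay, wcPlay]
    simp only [ih, hs]
    rw [List.append_assoc]


def Good (v0 : Fin n) (l : ℕ) (L : List (Fin n)) (cl : WCHist n → Bool) : Prop :=
  (∀ r' < 2 ^ l - l - 1,
    (strat v0 l L (wcPlay (strat v0 l L) cl r')).1 ≠ (strat v0 l L (wcPlay (strat v0 l L) cl r')).2 ∧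
    ¬ (strat v0 l L (wcPlay (strat v0 l L) cl r')).1.IsDiag ∧
    ¬ (strat v0 l L (wcPlay (strat v0 l L) cl r')).2.IsDiag ∧
    (strat v0 l L (wcPlay (strat v0 l L) cl r')).1 ∉ wcClaimed (wcPlay (strat v0 l L) cl r') ∧
    (strat v0 l L (wcPlay (strat v0 l L) cl r')).2 ∉ wcClaimed (wcPlay (strat v0 l L) cl r') ∧
    (∀ a ∈ (strat v0 l L (wcPlay (strat v0 l L) cl r')).1, a ∈ L) ∧
    (∀ a ∈ (strat v0 l L (wcPlay (strat v0 l L) cl r')).2, a ∈ L)) ∧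
  ∃ w : Fin l → Fin n, Function.Injective w ∧
    (∀ hh : 0 < l, w ⟨0, hh⟩ = L.getD 0 v0) ∧
    (∀ i, w i ∈ L) ∧
    (∀ i j : Fin l, i ≠ j → s(w i, w j) ∈ wcRed (wcPlay (strat v0 l L) cl (2 ^ l - l - 1))) ∧
    (∀ e ∈ wcClaimed (wcPlay (strat v0 l L) cl (2 ^ l - l - 1)), ∃ i, w i ∈ e)

lemma key (v0 : Fin n) (l : ℕ) (hl : 1 ≤ l) (L : List (Fin n))
    (hL : L.length = 2 ^ l - 1) (hnd : L.Nodup) (cl : WCHist n → Bool) :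
    Good v0 l L cl := by
  induction l generalizing L cl with
  | zero => omega
  | succ l ih =>
    rcases Nat.eq_zero_or_pos l with rfl | hl1
    · -- base case l = 1
      constructor
      · intro r' hr'
        norm_num at hr'
      · refine ⟨fun _ => L.getD 0 v0, fun a b _ => Fin.ext (by omega), fun _ => rfl,
          ?_, ?_, ?_⟩
        · intro i
          rw [List.getD_eq_getElem L v0 (by omega)]
          exact List.getElem_mem _
        · intro i j hij
          exact absurd (Fin.ext (by omega : (i:ℕ) = (j:ℕ))) hij
        · intro e he
          have h0 : (2:ℕ) ^ 1 - 1 - 1 = 0 := by norm_num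
          rw [h0] at he
          simp [wcClaimed, wcPlay] at he
    · -- inductive step
      have hlt : l < 2 ^ l := (Nat.lt_two_pow_self (n := l))
      have h2 : 2 ^ (l + 1) = 2 * 2 ^ l := by rw [pow_succ]; ring
      have hm2 : 2 ≤ 2 ^ l := by
        calc 2 = 2 ^ 1 := by norm_num
        _ ≤ 2 ^ l := Nat.pow_le_pow_right (by norm_num) hl1
      set m : ℕ := 2 ^ l - 1 with hm
      have hLlen : L.length = 2 * m + 1 := by omega
      have hinj : ∀ i j : ℕ, i < L.length → j < L.length →
          L.getD i v0 = L.getD j v0 → i = j := by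
        intro i j hi hj hij
        rw [List.getD_eq_getElem _ _ hi, List.getD_eq_getElem _ _ hj] at hij
        exact (List.Nodup.getElem_inj_iff hnd).mp hij
      have hmemL : ∀ i : ℕ, i < L.length → L.getD i v0 ∈ L := by
        intro i hi
        rw [List.getD_eq_getElem _ _ hi]
        exact List.getElem_mem _
      have hoffer : ∀ h : WCHist n, h.length < m → strat v0 (l+1) L h =
          (s(L.getD 0 v0, L.getD (2 * h.length + 1) v0),
           s(L.getD 0 v0, L.getD (2 * h.length + 2) v0)) := by
        intro h hh
        rw [strat]
        rw [if_pos (by omega)]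
      set f : ℕ → Fin n := fun k =>
        L.getD (2 * k + (if cl (wcPlay (strat v0 (l+1) L) cl k) then 1 else 2)) v0 with hf
      set L2 : List (Fin n) := (List.range m).map f with hL2def
      have hfbound : ∀ k, k < m →
          1 ≤ 2 * k + (if cl (wcPlay (strat v0 (l+1) L) cl k) then 1 else 2) ∧
          2 * k + (if cl (wcPlay (strat v0 (l+1) L) cl k) then 1 else 2) < L.length := by
        intro k hk
        split <;> omega
      have hL2len : L2.length = 2 ^ l - 1 := by simp [hL2def, hm]
      have hmemL2 : ∀ x ∈ L2, ∃ k, k < m ∧ x = f k := by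
        intro x hx
        rw [hL2def, List.mem_map] at hx
        obtain ⟨k, hk, hkx⟩ := hx
        exact ⟨k, List.mem_range.mp hk, hkx.symm⟩
      have hL2subL : ∀ x ∈ L2, x ∈ L := by
        intro x hx
        obtain ⟨k, hk, rfl⟩ := hmemL2 x hx
        exact hmemL _ (hfbound k hk).2
      have hw1L2 : L.getD 0 v0 ∉ L2 := by
        intro hx
        obtain ⟨k, hk, hke⟩ := hmemL2 _ hx
        have := hinj _ _ (by omega) (hfbound k hk).2 hke
        have := (hfbound k hk).1
        omega
      have hL2nd : L2.Nodup := by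
        refine List.Nodup.map_on ?_ (List.nodup_range (n := m))
        intro x hx y hy hxy
        rw [List.mem_range] at hx hy
        have := hinj _ _ (hfbound x hx).2 (hfbound y hy).2 hxy
        have h1 := (hfbound x hx)
        have h2 := (hfbound y hy)
        revert this
        split <;> split <;> omega
      have hH0len : (wcPlay (strat v0 (l+1) L) cl m).length = m := wcPlay_length _ _ _
      have hs : ∀ h : WCHist n,
          strat v0 (l+1) L (wcPlay (strat v0 (l+1) L) cl m ++ h) = strat v0 l L2 h := by
        intro h
        rw [strat]
        rw [if_neg (by rw [List.length_append, hH0len]; omega)]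
        have hdrop : (wcPlay (strat v0 (l+1) L) cl m ++ h).drop m = h :=
          List.drop_left' hH0len
        rw [hdrop]
        congr 1
        rw [hL2def]
        apply List.map_congr_left
        intro k hk
        rw [List.mem_range] at hk
        rw [List.getD_append _ _ _ _ (by rw [hH0len]; exact hk)]
        rw [wcPlay_getD _ _ hk]
      have hcomp := wcPlay_comp (strat v0 (l+1) L) (strat v0 l L2) cl m hs
      set cl' : WCHist n → Bool :=
        fun h => cl (wcPlay (strat v0 (l+1) L) cl m ++ h) with hcl'
      have hws_sub : ∀ t, strat v0 (l+1) L (wcPlay (strat v0 (l+1) L) cl (m + t)) =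
          strat v0 l L2 (wcPlay (strat v0 l L2) cl' t) := by
        intro t
        rw [hcomp t]
        exact hs _
      have hcl_sub : ∀ t, cl (wcPlay (strat v0 (l+1) L) cl (m + t)) =
          cl' (wcPlay (strat v0 l L2) cl' t) := by
        intro t
        rw [hcomp t]
      obtain ⟨legal', w', inj', hw0', mem', red', cov'⟩ := ih hl1 L2 hL2len hL2nd cl'
      have hR : 2 ^ (l + 1) - (l + 1) - 1 = m + (2 ^ l - l - 1) := by omega
      have hofferk : ∀ k, k < m → strat v0 (l+1) L (wcPlay (strat v0 (l+1) L) cl k) =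
          (s(L.getD 0 v0, L.getD (2 * k + 1) v0), s(L.getD 0 v0, L.getD (2 * k + 2) v0)) := by
        intro k hk
        have := hoffer (wcPlay (strat v0 (l+1) L) cl k) (by rw [wcPlay_length]; exact hk)
        rwa [wcPlay_length] at this
      refine ⟨?_, ?_⟩
      · -- legality
        intro r' hr'
        rw [hR] at hr'
        by_cases hcase : r' < m
        · rw [hofferk r' hcase]
          have hb0 : 0 < L.length := by omega
          have hb1 : 2 * r' + 1 < L.length := by omega
          have hb2 : 2 * r' + 2 < L.length := by omega
          refine ⟨?_, ?_, ?_, ?_, ?_, ?_, ?_⟩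
          · intro h
            have := hinj _ _ hb1 hb2 (Sym2.congr_right.mp h)
            omega
          · rw [Sym2.mk_isDiag_iff]
            intro h
            have := hinj _ _ hb0 hb1 h
            omega
          · rw [Sym2.mk_isDiag_iff]
            intro h
            have := hinj _ _ hb0 hb2 h
            omega
          · intro hclaim
            rw [mem_wcClaimed_wcPlay] at hclaim
            obtain ⟨k, hk, hor⟩ := hclaim
            rw [hofferk k (by omega)] at hor
            rcases hor with h | h
            · have := hinj _ _ hb1 (by omega) (Sym2.congr_right.mp h)
              omega
            · have := hinj _ _ hb1 (by omega) (Sym2.congr_right.mp h)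
              omega
          · intro hclaim
            rw [mem_wcClaimed_wcPlay] at hclaim
            obtain ⟨k, hk, hor⟩ := hclaim
            rw [hofferk k (by omega)] at hor
            rcases hor with h | h
            · have := hinj _ _ hb2 (by omega) (Sym2.congr_right.mp h)
              omega
            · have := hinj _ _ hb2 (by omega) (Sym2.congr_right.mp h)
              omega
          · intro a ha
            rw [Sym2.mem_iff] at ha
            rcases ha with rfl | rfl
            · exact hmemL 0 hb0
            · exact hmemL _ hb1
          · intro a ha
            rw [Sym2.mem_iff] at ha
            rcases ha with rfl | rfl
            · exact hmemL 0 hb0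
            · exact hmemL _ hb2
        · obtain ⟨t, rfl⟩ : ∃ t, r' = m + t := ⟨r' - m, by omega⟩
          have ht : t < 2 ^ l - l - 1 := by omega
          rw [hws_sub t]
          obtain ⟨hne, hd1, hd2, hnc1, hnc2, he1, he2⟩ := legal' t ht
          have hclaim_sub : ∀ e : Sym2 (Fin n), (∀ a ∈ e, a ∈ L2) →
              e ∈ wcClaimed (wcPlay (strat v0 (l+1) L) cl (m + t)) →
              e ∈ wcClaimed (wcPlay (strat v0 l L2) cl' t) := by
            intro e heL2 hecl
            rw [mem_wcClaimed_wcPlay] at hecl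
            obtain ⟨k, hk, hor⟩ := hecl
            by_cases hk' : k < m
            · exfalso
              rw [hofferk k hk'] at hor
              have hw1e : L.getD 0 v0 ∈ e := by
                rcases hor with rfl | rfl
                · exact Sym2.mem_mk_left _ _
                · exact Sym2.mem_mk_left _ _
              exact hw1L2 (heL2 _ hw1e)
            · obtain ⟨t', rfl⟩ : ∃ t', k = m + t' := ⟨k - m, by omega⟩
              rw [hws_sub t'] at hor
              rw [mem_wcClaimed_wcPlay]
              exact ⟨t', by omega, hor⟩
          exact ⟨hne, hd1, hd2, fun hc => hnc1 (hclaim_sub _ he1 hc),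
            fun hc => hnc2 (hclaim_sub _ he2 hc),
            fun a ha => hL2subL a (he1 a ha), fun a ha => hL2subL a (he2 a ha)⟩
      · -- the clique
        rw [hR]
        have hred1 : ∀ x ∈ L2, s(L.getD 0 v0, x) ∈
            wcRed (wcPlay (strat v0 (l+1) L) cl (m + (2 ^ l - l - 1))) := by
          intro x hx
          obtain ⟨k, hk, rfl⟩ := hmemL2 x hx
          rw [mem_wcRed_wcPlay]
          refine ⟨k, by omega, ?_⟩
          rw [hofferk k hk]
          cases hb : cl (wcPlay (strat v0 (l+1) L) cl k) with
          | true =>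
            left
            refine ⟨rfl, ?_⟩
            rw [hf]
            simp [hb]
          | false =>
            right
            refine ⟨rfl, ?_⟩
            rw [hf]
            simp [hb]
        have hred_sub : ∀ e ∈ wcRed (wcPlay (strat v0 l L2) cl' (2 ^ l - l - 1)),
            e ∈ wcRed (wcPlay (strat v0 (l+1) L) cl (m + (2 ^ l - l - 1))) := by
          intro e he
          rw [mem_wcRed_wcPlay] at he ⊢
          obtain ⟨k, hk, hor⟩ := he
          exact ⟨m + k, by omega, by rw [hws_sub k, hcl_sub k]; exact hor⟩
        refine ⟨Fin.cases (L.getD 0 v0) w', ?_, ?_, ?_, ?_, ?_⟩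
        · refine fun a b => ?_
          cases a using Fin.cases with
          | zero =>
            cases b using Fin.cases with
            | zero => intro _; rfl
            | succ j =>
              simp only [Fin.cases_zero, Fin.cases_succ]
              intro hab
              exact absurd (hab.symm ▸ mem' j) hw1L2
          | succ i =>
            cases b using Fin.cases with
            | zero =>
              simp only [Fin.cases_zero, Fin.cases_succ]
              intro hab
              exact absurd (hab ▸ mem' i) hw1L2
            | succ j =>
              simp only [Fin.cases_succ]
              intro hab
              rw [inj' hab]
        · intro hh
          exact Fin.cases_zero ..
        · intro i
          cases i using Fin.cases with
          | zero =>
            simp only [Fin.cases_zero]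
            exact hmemL 0 (by omega)
          | succ i =>
            simp only [Fin.cases_succ]
            exact hL2subL _ (mem' i)
        · intro i j hij
          cases i using Fin.cases with
          | zero =>
            cases j using Fin.cases with
            | zero => exact absurd rfl hij
            | succ j =>
              simp only [Fin.cases_zero, Fin.cases_succ]
              exact hred1 _ (mem' j)
          | succ i =>
            cases j using Fin.cases with
            | zero =>
              simp only [Fin.cases_zero, Fin.cases_succ]
              rw [Sym2.eq_swap]
              exact hred1 _ (mem' i)
            | succ j =>
              simp only [Fin.cases_succ]
              exact hred_sub _ (red' i j (fun h => hij (congrArg Fin.succ h)))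
        · intro e he
          rw [mem_wcClaimed_wcPlay] at he
          obtain ⟨k, hk, hor⟩ := he
          by_cases hk' : k < m
          · refine ⟨0, ?_⟩
            simp only [Fin.cases_zero]
            rw [hofferk k hk'] at hor
            rcases hor with rfl | rfl
            · exact Sym2.mem_mk_left _ _
            · exact Sym2.mem_mk_left _ _
          · obtain ⟨t', rfl⟩ : ∃ t', k = m + t' := ⟨k - m, by omega⟩
            rw [hws_sub t'] at hor
            obtain ⟨i, hi⟩ := cov' e (by rw [mem_wcClaimed_wcPlay]; exact ⟨t', by omega, hor⟩)
            refine ⟨i.succ, ?_⟩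
            simp only [Fin.cases_succ]
            exact hi


/-- For every `l ≥ 2`, any set `S` of `2^l - 1` vertices of an initially
empty board and any prescribed `v1 ∈ S`, Waiter has a strategy which, against any Client,
within at most `2^l` legally played rounds forces a red clique on `l` vertices
`w_1, ..., w_l ⊆ S` with `w_1 = v1`, such that every claimed edge (red or blue) has at
least one endpoint among the `w_i`. -/
theorem stmt_7 (n l : ℕ) (hl : 2 ≤ l) (S : Finset (Fin n)) (hS : S.card = 2 ^ l - 1)
    (v1 : Fin n) (hv1 : v1 ∈ S) :
    ∃ ws : WCHist n → Sym2 (Fin n) × Sym2 (Fin n),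
      ∀ cl : WCHist n → Bool, ∃ r ≤ 2 ^ l,
        (∀ r' < r,
          (ws (wcPlay ws cl r')).1 ≠ (ws (wcPlay ws cl r')).2 ∧
          ¬ (ws (wcPlay ws cl r')).1.IsDiag ∧ ¬ (ws (wcPlay ws cl r')).2.IsDiag ∧
          (ws (wcPlay ws cl r')).1 ∉ wcClaimed (wcPlay ws cl r') ∧
          (ws (wcPlay ws cl r')).2 ∉ wcClaimed (wcPlay ws cl r')) ∧
        ∃ w : Fin l → Fin n, Function.Injective w ∧ w ⟨0, by omega⟩ = v1 ∧
          (∀ i, w i ∈ S) ∧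
          (∀ i j : Fin l, i ≠ j → s(w i, w j) ∈ wcRed (wcPlay ws cl r)) ∧
          (∀ e ∈ wcClaimed (wcPlay ws cl r), ∃ i, w i ∈ e) := by
  classical
  have hlt : l < 2 ^ l := (Nat.lt_two_pow_self (n := l))
  set L : List (Fin n) := v1 :: (S.erase v1).toList with hLdef
  have hnd : L.Nodup := by
    rw [hLdef, List.nodup_cons]
    exact ⟨by simp [Finset.mem_toList], Finset.nodup_toList _⟩
  have hlen : L.length = 2 ^ l - 1 := by
    rw [hLdef]
    simp only [List.length_cons, Finset.length_toList, Finset.card_erase_of_mem hv1, hS]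
    omega
  refine ⟨strat v1 l L, fun cl => ?_⟩
  obtain ⟨legal, w, inj, hw0, hmem, hred, hcov⟩ := key v1 l (by omega) L hlen hnd cl
  refine ⟨2 ^ l - l - 1, by omega, ?_, w, inj, ?_, fun i => ?_, hred, hcov⟩
  · intro r' hr'
    obtain ⟨a, b, c, d, e, _, _⟩ := legal r' hr'
    exact ⟨a, b, c, d, e⟩
  · rw [hw0 (by omega), hLdef]
    rfl
  · have hm := hmem i
    rw [hLdef, List.mem_cons] at hm
    rcases hm with rfl | hm
    · exact hv1
    · exact S.mem_of_mem_erase (Finset.mem_toList.mp hm)
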